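/- arXiv:2008.11118 — 3 statements merged into one kernel-verified Lean document; each statement's English description precedes it below -/
import Mathlib

section
/- For every ideal J of A, the group G acts on the quotient ring B/(J·B) by ring automorphisms (induced from the action on B), and the canonical ring homomorphism A/J → (B/(J·B))^G into the invariant subring of the quotient is bijective. -/
/-- The subring of `G`-invariant elements of `B`. -/
def fixedSubring (G B : Type*) [Group G] [CommRing B] [MulSemiringAction G B] : Subring B where
  carrier := {b | ∀ g : G, g • b = b}
  mul_mem' := by intro a b ha hb g; rw [smul_mul', ha, hb]
  one_mem' := fun g => smul_one g
  add_mem' := by intro a b ha hb g; rw [smul_add, ha, hb]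
  zero_mem' := fun g => smul_zero g
  neg_mem' := by intro a ha g; rw [smul_neg, ha]

/-- The extension `J·B` to `B` of an ideal `J` of the invariant ring `A = B^G`. -/
def extendedIdeal (G B : Type*) [Group G] [CommRing B] [MulSemiringAction G B]
    (J : Ideal (fixedSubring G B)) : Ideal B :=
  Ideal.map (fixedSubring G B).subtype J

section
variable {G B : Type*} [Group G] [CommRing B] [MulSemiringAction G B]

lemma smul_coe_fixed (g : G) (j : fixedSubring G B) : g • (j : B) = (j : B) := j.2 g

lemma smul_mem_extended (J : Ideal (fixedSubring G B)) (g : G) {x : B}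
    (hx : x ∈ extendedIdeal G B J) : g • x ∈ extendedIdeal G B J := by
  refine Submodule.span_induction (p := fun x _ => g • x ∈ extendedIdeal G B J) ?_ ?_ ?_ ?_ hx
  · rintro _ ⟨j, hj, rfl⟩
    simp only [Subring.coe_subtype, smul_coe_fixed]
    exact Ideal.mem_map_of_mem _ hj
  · simp only [smul_zero]; exact Ideal.zero_mem _
  · intro a b _ _ ha hb
    show g • (a + b) ∈ _
    rw [smul_add]; exact Ideal.add_mem _ ha hb
  · intro c x _ hcx
    show g • (c • x) ∈ _
    rw [smul_eq_mul, smul_mul']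
    exact Ideal.mul_mem_left _ _ hcx

variable [Fintype G]

lemma sum_smul_mem_fixed (b : B) : (∑ g : G, g • b) ∈ fixedSubring G B := by
  intro g
  rw [Finset.smul_sum]
  exact Fintype.sum_equiv (Equiv.mulLeft g) _ _ (fun h => by simp [smul_smul])

lemma sum_smul_of_fixed {a : B} (ha : a ∈ fixedSubring G B) :
    (∑ g : G, g • a) = (Fintype.card G : B) * a := by
  rw [Finset.sum_congr rfl (fun g _ => ha g)]
  simp [Finset.sum_const, nsmul_eq_mul]

lemma sum_smul_extended_mem (J : Ideal (fixedSubring G B)) {x : B}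
    (hx : x ∈ extendedIdeal G B J) :
    ∃ a ∈ J, (a : B) = ∑ g : G, g • x := by
  have H : ∀ b : B, ∃ a ∈ J, (a : B) = ∑ g : G, g • (b * x) := by
    refine Submodule.span_induction
      (p := fun x _ => ∀ b : B, ∃ a ∈ J, (a : B) = ∑ g : G, g • (b * x)) ?_ ?_ ?_ ?_ hx
    · rintro _ ⟨j, hj, rfl⟩ b
      refine ⟨⟨∑ g : G, g • b, sum_smul_mem_fixed b⟩ * j, J.mul_mem_left _ hj, ?_⟩
      push_cast
      rw [Finset.sum_mul]
      exact Finset.sum_congr rfl fun g _ => by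
        simp only [Subring.coe_subtype, smul_mul', smul_coe_fixed]
    · intro b; exact ⟨0, J.zero_mem, by simp⟩
    · intro x y _ _ ihx ihy b
      obtain ⟨a1, ha1, e1⟩ := ihx b
      obtain ⟨a2, ha2, e2⟩ := ihy b
      refine ⟨a1 + a2, J.add_mem ha1 ha2, ?_⟩
      push_cast
      rw [e1, e2, ← Finset.sum_add_distrib]
      exact Finset.sum_congr rfl fun g _ => by rw [← smul_add, mul_add]
    · intro c x _ ihx b
      obtain ⟨a, ha, e⟩ := ihx (b * c)
      refine ⟨a, ha, ?_⟩
      rw [e]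
      exact Finset.sum_congr rfl fun g _ => by rw [smul_eq_mul, mul_assoc]
  obtain ⟨a, ha, e⟩ := H 1
  exact ⟨a, ha, by simpa using e⟩

end

/-- The canonical ring homomorphism `A/J → B/(J·B)`. -/
def canonicalQuotMap (G B : Type*) [Group G] [CommRing B] [MulSemiringAction G B]
    (J : Ideal (fixedSubring G B)) :
    (fixedSubring G B) ⧸ J →+* B ⧸ extendedIdeal G B J :=
  Ideal.Quotient.lift J
    ((Ideal.Quotient.mk (extendedIdeal G B J)).comp (fixedSubring G B).subtype)
    (fun a ha => by
      simp only [RingHom.comp_apply, Ideal.Quotient.eq_zero_iff_mem]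
      exact Ideal.mem_map_of_mem _ ha)

/-- For every ideal `J` of `A = B^G`, the action of `G` on `B` descends to an action on the
quotient ring `B/(J·B)` by ring automorphisms, and the canonical ring homomorphism
`A/J → (B/(J·B))^G` onto the invariant subring of the quotient is bijective; here the
invariants of the quotient are the residue classes fixed by the induced action. -/
theorem quotient_action_descends_and_invariants
    {G B : Type*} [Group G] [Fintype G] [CommRing B] [MulSemiringAction G B]
    (hcard : Invertible (Fintype.card G : B))
    (J : Ideal (fixedSubring G B)) :
    (∀ (g : G) (b b' : B),
        Ideal.Quotient.mk (extendedIdeal G B J) b = Ideal.Quotient.mk (extendedIdeal G B J) b' →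
        Ideal.Quotient.mk (extendedIdeal G B J) (g • b)
          = Ideal.Quotient.mk (extendedIdeal G B J) (g • b')) ∧
    Function.Injective (canonicalQuotMap G B J) ∧
    Set.range (canonicalQuotMap G B J) =
      {x : B ⧸ extendedIdeal G B J | ∀ (g : G) (b : B),
        Ideal.Quotient.mk (extendedIdeal G B J) b = x →
        Ideal.Quotient.mk (extendedIdeal G B J) (g • b) = x}:= by
  have hn : (⅟(Fintype.card G : B)) ∈ fixedSubring G B := by
    intro g
    have h1 : g • ((Fintype.card G : ℕ) : B) = ((Fintype.card G : ℕ) : B) :=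
      map_natCast (MulSemiringAction.toRingHom G B g) _
    refine (invOf_eq_right_inv ?_).symm
    have e0 : (Fintype.card G : B) * g • ⅟(Fintype.card G : B)
        = g • ((Fintype.card G : B) * ⅟(Fintype.card G : B)) := by
      rw [smul_mul', h1]
    rw [e0, mul_invOf_self, smul_one]
  have cq_mk : ∀ a : fixedSubring G B,
      canonicalQuotMap G B J (Ideal.Quotient.mk J a)
        = Ideal.Quotient.mk (extendedIdeal G B J) (a : B) :=
    fun a => Ideal.Quotient.lift_mk _ _ _
  have h1 : ∀ (g : G) (b b' : B),
      Ideal.Quotient.mk (extendedIdeal G B J) b = Ideal.Quotient.mk (extendedIdeal G B J) b' →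
      Ideal.Quotient.mk (extendedIdeal G B J) (g • b)
        = Ideal.Quotient.mk (extendedIdeal G B J) (g • b') := by
    intro g b b' h
    rw [Ideal.Quotient.eq] at h ⊢
    rw [← smul_sub]
    exact smul_mem_extended J g h
  refine ⟨h1, ?_, ?_⟩
  · intro x y hxy
    obtain ⟨a, rfl⟩ := Ideal.Quotient.mk_surjective x
    obtain ⟨c, rfl⟩ := Ideal.Quotient.mk_surjective y
    rw [cq_mk, cq_mk, Ideal.Quotient.eq] at hxy
    have hac : ((a - c : fixedSubring G B) : B) ∈ extendedIdeal G B J := hxy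
    obtain ⟨j, hj, e⟩ := sum_smul_extended_mem J hac
    have e2 : (j : B) = (Fintype.card G : B) * ((a - c : fixedSubring G B) : B) := by
      rw [e, sum_smul_of_fixed (a - c).2]
    have key : (⟨⅟(Fintype.card G : B), hn⟩ * j : fixedSubring G B) = a - c := by
      apply Subtype.ext
      show ⅟(Fintype.card G : B) * (j : B) = ((a - c : fixedSubring G B) : B)
      rw [e2, ← mul_assoc, invOf_mul_self, one_mul]
    rw [Ideal.Quotient.eq, ← key]
    exact J.mul_mem_left _ hj
  · ext x
    constructor
    · rintro ⟨y, rfl⟩ g b hb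
      obtain ⟨a, rfl⟩ := Ideal.Quotient.mk_surjective y
      rw [cq_mk] at hb ⊢
      rw [h1 g b a hb, smul_coe_fixed g a]
    · intro hxmem
      obtain ⟨b, rfl⟩ := Ideal.Quotient.mk_surjective x
      have hb : ∀ g : G, Ideal.Quotient.mk (extendedIdeal G B J) (g • b)
          = Ideal.Quotient.mk (extendedIdeal G B J) b := fun g => hxmem g b rfl
      have hmem : (∑ g : G, g • b) - (Fintype.card G : B) * b ∈ extendedIdeal G B J := by
        have e3 : (∑ g : G, g • b) - (Fintype.card G : B) * b = ∑ g : G, (g • b - b) := by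
          rw [Finset.sum_sub_distrib]
          congr 1
          simp [Finset.sum_const, nsmul_eq_mul]
        rw [e3]
        exact Ideal.sum_mem _ fun g _ => (Ideal.Quotient.eq).mp (hb g)
      refine ⟨Ideal.Quotient.mk J ⟨⅟(Fintype.card G : B) * ∑ g : G, g • b,
        Subring.mul_mem _ hn (sum_smul_mem_fixed b)⟩, ?_⟩
      rw [cq_mk]
      show Ideal.Quotient.mk _ (⅟(Fintype.card G : B) * ∑ g : G, g • b)
        = Ideal.Quotient.mk _ b
      rw [Ideal.Quotient.eq]
      have e4 : ⅟(Fintype.card G : B) * (∑ g : G, g • b) - b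
          = ⅟(Fintype.card G : B) * ((∑ g : G, g • b) - (Fintype.card G : B) * b) := by
        rw [mul_sub, ← mul_assoc, invOf_mul_self, one_mul]
      rw [e4]
      exact Ideal.mul_mem_left _ _ hmem
end

section
/- Let M be a finitely generated B-module with compatible G-action. Suppose that for every field k, every ring homomorphism φ : B → k, and every g ∈ G stabilizing φ, the element g acts trivially on the fiber M ⊗_{B,φ} k. Then M is generated as a B-module by its invariants M^G, i.e., the counit map B ⊗_A M^G → M, b ⊗ m ↦ b • m, is surjective. -/
open TensorProduct

/-- A `B`-module `M` with a compatible `G`-action: `G` acts on `M` by additive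
automorphisms and `g • (b • m) = (g • b) • (g • m)`. -/
class CompatibleAction (G B M : Type*) [Group G] [CommRing B] [MulSemiringAction G B]
    [AddCommGroup M] [Module B M] extends DistribMulAction G M where
  smul_smul_comm : ∀ (g : G) (b : B) (m : M), g • (b • m) = (g • b) • (g • m)

lemma fiber_eq {B : Type*} [CommRing B] (m : Ideal B) {M : Type*} [AddCommGroup M]
    [Module B M] (x y : M)
    (h : letI : Algebra B (B ⧸ m) := (Ideal.Quotient.mk m).toAlgebra
         x ⊗ₜ[B] (1 : B ⧸ m) = y ⊗ₜ[B] (1 : B ⧸ m)) :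
    Submodule.Quotient.mk (p := (m • ⊤ : Submodule B M)) x =
      Submodule.Quotient.mk (p := (m • ⊤ : Submodule B M)) y := by
  letI : Algebra B (B ⧸ m) := (Ideal.Quotient.mk m).toAlgebra
  have hsm : ∀ (b : B) (v : M ⧸ (m • ⊤ : Submodule B M)),
      Ideal.Quotient.mk m b • v = b • v := by
    intro b v
    obtain ⟨z, rfl⟩ := Submodule.Quotient.mk_surjective _ v
    rw [Module.Quotient.mk_smul_mk, Submodule.Quotient.mk_smul]
  let f : M →ₗ[B] (B ⧸ m) →ₗ[B] (M ⧸ (m • ⊤ : Submodule B M)) :=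
    { toFun := fun x =>
        { toFun := fun c => c • Submodule.Quotient.mk (p := (m • ⊤ : Submodule B M)) x
          map_add' := fun c d => add_smul c d _
          map_smul' := fun b c => by
            simp only [RingHom.id_apply]
            rw [← hsm b, ← mul_smul]
            congr 1 }
      map_add' := fun a b => LinearMap.ext fun c => by
        simp only [LinearMap.coe_mk, AddHom.coe_mk, LinearMap.add_apply]
        rw [Submodule.Quotient.mk_add, smul_add]
      map_smul' := fun b a => LinearMap.ext fun c => by
        simp only [LinearMap.coe_mk, AddHom.coe_mk, RingHom.id_apply, LinearMap.smul_apply]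
        rw [Submodule.Quotient.mk_smul, ← hsm, ← hsm, smul_comm] }
  have := congrArg (TensorProduct.lift f) h
  simpa [f] using this

lemma aux_max {G : Type*} {B : Type u} {M : Type*} [Group G] [Fintype G] [CommRing B]
    [MulSemiringAction G B] [AddCommGroup M] [Module B M] [CompatibleAction G B M]
    (hcard : Invertible (Fintype.card G : B))
    (htriv : ∀ (k : Type u) [Field k], ∀ (φ : B →+* k) (g : G),
      (∀ b : B, φ (g • b) = φ b) →
      ∀ x : M,
        haveI : Algebra B k := φ.toAlgebra
        (g • x) ⊗ₜ[B] (1 : k) = x ⊗ₜ[B] (1 : k))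
    (m : Ideal B) (hm : m.IsMaximal) :
    Submodule.span B {x : M | ∀ g : G, g • x = x} ⊔ (m • ⊤ : Submodule B M) = ⊤ := by
  classical
  letI : Field (B ⧸ m) := Ideal.Quotient.field m
  set S : Set M := {x : M | ∀ g : G, g • x = x} with hSdef
  set V := M ⧸ (m • ⊤ : Submodule B M) with hV
  set π : M →ₗ[B] V := (m • ⊤ : Submodule B M).mkQ with hπ
  set n : ℕ := Fintype.card G with hn
  -- scalar compatibility on V
  have hsm : ∀ (b : B) (v : V), Ideal.Quotient.mk m b • v = b • v := by
    intro b v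
    obtain ⟨z, rfl⟩ := Submodule.Quotient.mk_surjective _ v
    rw [Module.Quotient.mk_smul_mk, Submodule.Quotient.mk_smul]
  -- the averaging operator
  have hfixNat : ∀ (g : G) (j : ℕ), g • ((j : B)) = (j : B) := by
    intro g j
    exact map_natCast (MulSemiringAction.toRingHom G B g) j
  have hfixInv : ∀ g : G, g • (⅟(n : B)) = ⅟(n : B) := by
    intro g
    refine (invOf_eq_right_inv ?_).symm
    have : g • ((n : B) * ⅟(n : B)) = g • (1 : B) := by rw [mul_invOf_self]
    rw [smul_mul', hfixNat, smul_one] at this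
    exact this
  set E : M → M := fun y => ⅟(n : B) • ∑ g : G, g • y with hE
  have hES : ∀ y : M, E y ∈ S := by
    intro y h
    rw [hE]
    simp only
    rw [CompatibleAction.smul_smul_comm h (⅟(n : B)) (∑ g : G, g • y), hfixInv]
    congr 1
    rw [Finset.smul_sum]
    simp only [smul_smul]
    exact Equiv.sum_comp (Equiv.mulLeft h) (fun g => g • y)
  -- the decomposition subgroup
  set D : Subgroup G :=
    { carrier := {g : G | ∀ c : B, g • c ∈ m ↔ c ∈ m}
      one_mem' := fun c => by rw [one_smul]
      mul_mem' := fun {a b} ha hb c => by rw [mul_smul, ha, hb]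
      inv_mem' := fun {a} ha c => by
        conv_rhs => rw [← smul_inv_smul a c]
        rw [ha] } with hD
  have hmemD : ∀ g : G, g ∈ D ↔ ∀ c : B, g • c ∈ m ↔ c ∈ m := fun g => Iff.rfl
  -- choice of b
  have hbad : ∀ g : G, g ∉ D → ∃ c : B, g • c ∈ m ∧ c ∉ m := by
    intro g hg
    set ρ : B →+* B := MulSemiringAction.toRingHom G B g with hρ
    have hρs : Function.Surjective ρ := fun y => ⟨g⁻¹ • y, smul_inv_smul g y⟩
    have hJmax : (m.comap ρ).IsMaximal := Ideal.comap_isMaximal_of_surjective ρ hρs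
    by_contra hc
    push_neg at hc
    refine hg (fun c => ⟨fun h1 => ?_, fun h2 => ?_⟩)
    · exact hc c h1
    · -- c ∈ m → g • c ∈ m : from comap ρ m ≤ m and maximality
      have hle : m.comap ρ ≤ m := fun z hz => hc z hz
      have : m.comap ρ = m := hJmax.eq_of_le hm.ne_top hle
      rw [← this] at h2
      exact h2
  choose cc hcc1 hcc2 using hbad
  set c' : G → B := fun g => dite (g ∈ D) (fun _ => 1) (fun h => cc g h) with hc'
  have hc'm : ∀ g : G, g ∉ D → g • c' g ∈ m := by
    intro g hg
    rw [hc']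
    simp only
    rw [dif_neg hg]
    exact hcc1 g hg
  have hc'nm : ∀ g : G, c' g ∉ m := by
    intro g
    rw [hc']
    simp only
    by_cases hg : g ∈ D
    · rw [dif_pos hg]
      intro h1
      exact hm.ne_top (Ideal.eq_top_of_isUnit_mem m h1 isUnit_one)
    · rw [dif_neg hg]
      exact hcc2 g hg
  set T : Finset G := Finset.univ.filter (fun g => g ∉ D) with hT
  set b : B := ∏ g ∈ T, c' g with hb
  have hbm : b ∉ m := by
    intro hmem
    rw [hb] at hmem
    haveI := hm.isPrime
    obtain ⟨g, -, hg⟩ := Ideal.IsPrime.prod_mem_iff.mp hmem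
    exact hc'nm g hg
  have hgb : ∀ g : G, g ∉ D → g • b ∈ m := by
    intro g hg
    have hgT : g ∈ T := by simp [hT, hg]
    have : g • b = ∏ t ∈ T, g • c' t := by
      rw [hb]
      exact map_prod (MulSemiringAction.toRingHom G B g) c' T
    rw [this, ← Finset.mul_prod_erase T _ hgT]
    exact Ideal.mul_mem_right _ _ (hc'm g hg)
  -- semilinear characters on the residue field
  have hleD : ∀ g : D, m ≤ m.comap (MulSemiringAction.toRingHom G B (g : G)) := by
    intro g c hc
    exact ((hmemD _).mp g.2 c).mpr hc
  set σ : D → ((B ⧸ m) →* (B ⧸ m)) :=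
    fun g => (Ideal.quotientMap m (MulSemiringAction.toRingHom G B (g : G)) (hleD g)).toMonoidHom
    with hσ
  have hσmk : ∀ (g : D) (c : B),
      σ g (Ideal.Quotient.mk m c) = Ideal.Quotient.mk m ((g : G) • c) := by
    intro g c
    rw [hσ]
    exact Ideal.quotientMap_mk
  have hstab_of : ∀ g : D, σ g = σ 1 →
      ∀ c : B, Ideal.Quotient.mk m ((g : G) • c) = Ideal.Quotient.mk m c := by
    intro g hg c
    have h1 := congrArg (fun F => F (Ideal.Quotient.mk m c)) hg
    simp only [hσmk] at h1
    rwa [Subgroup.coe_one, one_smul] at h1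
  have hσ1 : ∀ g : D,
      (∀ c : B, Ideal.Quotient.mk m ((g : G) • c) = Ideal.Quotient.mk m c) → σ g = σ 1 := by
    intro g hg
    refine MonoidHom.ext fun y => ?_
    obtain ⟨c, rfl⟩ := Ideal.Quotient.mk_surjective y
    rw [hσmk, hσmk, hg c, Subgroup.coe_one, one_smul]
  -- the stabilizer subgroup of the residue map
  set I₀ : Subgroup G :=
    { carrier := {g : G | ∀ c : B, Ideal.Quotient.mk m (g • c) = Ideal.Quotient.mk m c}
      one_mem' := fun c => by rw [one_smul]
      mul_mem' := fun {a b} ha hb c => by rw [mul_smul, ha, hb]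
      inv_mem' := fun {a} ha c => by
        conv_rhs => rw [← smul_inv_smul a c]
        rw [ha] } with hI₀
  have hI₀D : ∀ g : G, g ∈ I₀ → g ∈ D := by
    intro g hg
    rw [hmemD]
    intro c
    rw [← Ideal.Quotient.eq_zero_iff_mem, ← Ideal.Quotient.eq_zero_iff_mem, hg c]
  -- the main step: every functional vanishing on (the image of) S vanishes
  have hmain : ∀ (ℓ : V →ₗ[B ⧸ m] (B ⧸ m)), (∀ s ∈ S, ℓ (π s) = 0) → ∀ x : M, ℓ (π x) = 0 := by
    intro ℓ hℓ x
    have hℓB : ∀ (c : B) (v : V), ℓ (c • v) = Ideal.Quotient.mk m c * ℓ v := by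
      intro c v
      rw [← hsm, map_smul, smul_eq_mul]
    have hexp : ∀ a : B, Ideal.Quotient.mk m (⅟(n : B)) *
        ∑ g : G, Ideal.Quotient.mk m (g • a) * ℓ (π (g • x)) = 0 := by
      intro a
      have h0 : ℓ (π (E (a • x))) = 0 := hℓ _ (hES _)
      have h1 : ℓ (π (E (a • x))) = Ideal.Quotient.mk m (⅟(n : B)) *
          ∑ g : G, Ideal.Quotient.mk m (g • a) * ℓ (π (g • x)) := by
        rw [hE]
        simp only
        rw [map_smul, hℓB, map_sum, map_sum]
        congr 1
        refine Finset.sum_congr rfl fun g _ => ?_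
        rw [CompatibleAction.smul_smul_comm g a x, map_smul, hℓB]
      rw [← h1, h0]
    have hvan : ∀ a : B, ∑ g : G, Ideal.Quotient.mk m (g • a) * ℓ (π (g • x)) = 0 := by
      intro a
      have h2 := congrArg (fun z => Ideal.Quotient.mk m ((n : B)) * z) (hexp a)
      simp only [mul_zero] at h2
      rwa [← mul_assoc, ← map_mul, mul_invOf_self, map_one, one_mul] at h2
    have hvan2 : ∀ a : B, ∑ g : D, Ideal.Quotient.mk m ((g : G) • a) *
        (Ideal.Quotient.mk m ((g : G) • b) * ℓ (π ((g : G) • x))) = 0 := by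
      intro a
      have h1 := hvan (a * b)
      rw [Finset.sum_congr rfl (fun g _ => by
        rw [smul_mul', map_mul, mul_assoc] :
        ∀ g ∈ Finset.univ, Ideal.Quotient.mk m (g • (a * b)) * ℓ (π (g • x)) =
          Ideal.Quotient.mk m (g • a) *
            (Ideal.Quotient.mk m (g • b) * ℓ (π (g • x))))] at h1
      rw [← Finset.sum_filter_of_ne (p := fun g => g ∈ D) (fun g _ hne => by
        by_contra hg
        exact hne (by rw [Ideal.Quotient.eq_zero_iff_mem.mpr (hgb g hg), zero_mul,
          mul_zero]))] at h1
      rwa [Finset.sum_subtype (p := fun g : G => g ∈ D)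
        (Finset.univ.filter (fun g : G => g ∈ D)) (fun g => by simp) _] at h1
    set coeff : D → B ⧸ m :=
      fun g => Ideal.Quotient.mk m ((g : G) • b) * ℓ (π ((g : G) • x)) with hcoeff
    set Tσ : Finset ((B ⧸ m) →* (B ⧸ m)) := Finset.univ.image σ with hTσ
    set F : ((B ⧸ m) →* (B ⧸ m)) → B ⧸ m :=
      fun s => ∑ g ∈ Finset.univ.filter (fun g : D => σ g = s), coeff g with hF
    have hgroup : ∀ y : B ⧸ m, ∑ s ∈ Tσ, F s * s y = 0 := by
      intro y
      obtain ⟨a, rfl⟩ := Ideal.Quotient.mk_surjective y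
      have h1 := hvan2 a
      rw [← Finset.sum_fiberwise_of_maps_to (g := σ) (t := Tσ)
        (fun g _ => Finset.mem_image_of_mem σ (Finset.mem_univ g))] at h1
      rw [← h1]
      refine Finset.sum_congr rfl fun s _ => ?_
      rw [hF]
      simp only
      rw [Finset.sum_mul]
      refine Finset.sum_congr rfl fun g hg => ?_
      have hgs : σ g = s := (Finset.mem_filter.mp hg).2
      rw [← hgs, mul_comm (coeff g), hσmk]
    have hli := linearIndependent_monoidHom (B ⧸ m) (B ⧸ m)
    rw [linearIndependent_iff'] at hli
    have hsum0 : (∑ s ∈ Tσ, F s • ((s : (B ⧸ m) → (B ⧸ m)))) = 0 := by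
      funext y
      rw [Finset.sum_apply]
      simp only [Pi.smul_apply, smul_eq_mul]
      rw [Pi.zero_apply]
      exact hgroup y
    have hF1 : F (σ 1) = 0 :=
      hli Tσ F hsum0 (σ 1) (Finset.mem_image_of_mem σ (Finset.mem_univ 1))
    -- compute F (σ 1)
    have hcard_eq : (Finset.univ.filter (fun g : D => σ g = σ 1)).card = Fintype.card I₀ := by
      rw [Fintype.card]
      refine Finset.card_bij' (fun g hg => (⟨(g : G), fun c =>
          hstab_of g (Finset.mem_filter.mp hg).2 c⟩ : I₀))
        (fun h _ => (⟨(h : G), hI₀D _ h.2⟩ : D)) ?_ ?_ ?_ ?_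
      · intro g hg
        exact Finset.mem_univ _
      · intro h hh
        refine Finset.mem_filter.mpr ⟨Finset.mem_univ _, hσ1 _ fun c => h.2 c⟩
      · intro g hg
        rfl
      · intro h hh
        rfl
    have hFval : F (σ 1) = (Fintype.card I₀ : B ⧸ m) * (Ideal.Quotient.mk m b * ℓ (π x)) := by
      rw [hF]
      simp only
      rw [Finset.sum_congr rfl (fun g hg => by
        have hst := hstab_of g (Finset.mem_filter.mp hg).2
        have hπgx : π ((g : G) • x) = π x := by
          rw [hπ, Submodule.mkQ_apply, Submodule.mkQ_apply]
          exact fiber_eq m _ _ (htriv (B ⧸ m) (Ideal.Quotient.mk m) (g : G) hst x)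
        rw [hcoeff]
        simp only
        rw [hst b, hπgx] :
        ∀ g ∈ Finset.univ.filter (fun g : D => σ g = σ 1),
          coeff g = Ideal.Quotient.mk m b * ℓ (π x))]
      rw [Finset.sum_const, hcard_eq, nsmul_eq_mul]
    have hunit : IsUnit ((Fintype.card I₀ : B ⧸ m)) := by
      obtain ⟨t, ht⟩ := Subgroup.card_subgroup_dvd_card I₀
      have hNG : IsUnit ((n : B ⧸ m)) := by
        have h3 : IsUnit ((n : B)) := isUnit_of_invertible _
        have h4 := h3.map (Ideal.Quotient.mk m)
        rwa [map_natCast] at h4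
      rw [Nat.card_eq_fintype_card, Nat.card_eq_fintype_card, ← hn] at ht
      rw [ht, Nat.cast_mul] at hNG
      exact isUnit_of_mul_isUnit_left hNG
    have hb0 : Ideal.Quotient.mk m b ≠ 0 := fun h => hbm (Ideal.Quotient.eq_zero_iff_mem.mp h)
    have h5 := hF1
    rw [hFval] at h5
    rcases mul_eq_zero.mp h5 with h | h
    · exact absurd h hunit.ne_zero
    · rcases mul_eq_zero.mp h with h' | h'
      · exact absurd h' hb0
      · exact h'
  -- the span of the image of S over the residue field is everything
  set Wk : Submodule (B ⧸ m) V := Submodule.span (B ⧸ m) ((π : M → V) '' S) with hWk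
  have hWtop : Wk = ⊤ := by
    by_contra hne
    obtain ⟨v, -, hv⟩ := SetLike.exists_of_lt (lt_top_iff_ne_top.mpr hne : Wk < ⊤)
    have hq : Wk.mkQ v ≠ 0 := by
      rw [Submodule.mkQ_apply, ne_eq, Submodule.Quotient.mk_eq_zero]
      exact hv
    obtain ⟨f, hf⟩ : ∃ f : Module.Dual (B ⧸ m) (V ⧸ Wk), f (Wk.mkQ v) ≠ 0 := by
      by_contra hall
      push_neg at hall
      exact hq ((Module.forall_dual_apply_eq_zero_iff (B ⧸ m) _).mp hall)
    have h0 : ∀ x : M, (f ∘ₗ Wk.mkQ) (π x) = 0 := by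
      refine hmain _ ?_
      intro s hs
      have h1 : π s ∈ Wk := by
        rw [hWk]
        exact Submodule.subset_span ⟨s, hs, rfl⟩
      rw [LinearMap.comp_apply, Submodule.mkQ_apply,
        (Submodule.Quotient.mk_eq_zero _).mpr h1, map_zero]
    obtain ⟨x0, hx0⟩ := Submodule.mkQ_surjective (m • ⊤ : Submodule B M) v
    have h6 := h0 x0
    rw [LinearMap.comp_apply] at h6
    rw [show π x0 = v from hx0] at h6
    exact hf h6
  -- back to scalars in B
  letI : IsScalarTower B (B ⧸ m) V := IsScalarTower.of_algebraMap_smul (fun r v => by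
    rw [Ideal.Quotient.algebraMap_eq]
    exact hsm r v)
  have hsurj : Function.Surjective (algebraMap B (B ⧸ m)) := by
    rw [Ideal.Quotient.algebraMap_eq]
    exact Ideal.Quotient.mk_surjective
  have hres := Submodule.restrictScalars_span B (B ⧸ m) hsurj ((π : M → V) '' S)
  rw [← hWk, hWtop] at hres
  have hspan : Submodule.span B ((π : M → V) '' S) = ⊤ := by
    rw [← hres]
    rfl
  have hmap : Submodule.map π (Submodule.span B S) = ⊤ := by
    rw [Submodule.map_span]
    exact hspan
  rw [sup_comm]
  exact (Submodule.map_mkQ_eq_top _ _).mp hmap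

/-- If for every field-valued point `φ : B → k` and every `g ∈ G` stabilizing `φ`, the
element `g` acts trivially on the fiber `M ⊗_{B,φ} k`, then the finitely generated
`B`-module `M` is generated by its invariants `M^G`. -/
theorem generated_by_invariants_of_trivial_fiber_actions
    {G : Type*} {B : Type u} {M : Type*} [Group G] [Fintype G] [CommRing B]
    [MulSemiringAction G B] [AddCommGroup M] [Module B M] [CompatibleAction G B M]
    (hcard : Invertible (Fintype.card G : B))
    (hfg : Module.Finite B M)
    (htriv : ∀ (k : Type u) [Field k], ∀ (φ : B →+* k) (g : G),
      (∀ b : B, φ (g • b) = φ b) →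
      ∀ m : M,
        haveI : Algebra B k := φ.toAlgebra
        (g • m) ⊗ₜ[B] (1 : k) = m ⊗ₜ[B] (1 : k)) :
    Submodule.span B {m : M | ∀ g : G, g • m = m} = ⊤ := by
  classical
  set S : Set M := {x : M | ∀ g : G, g • x = x} with hSdef
  set N : Submodule B M := Submodule.span B S with hN
  by_contra hne
  have hQex : ∃ q : M ⧸ N, q ≠ 0 := by
    by_contra hall
    push_neg at hall
    refine hne (Submodule.eq_top_iff'.mpr fun x => ?_)
    have := hall (N.mkQ x)
    rwa [Submodule.mkQ_apply, Submodule.Quotient.mk_eq_zero] at this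
  obtain ⟨q, hq⟩ := hQex
  have hann : Module.annihilator B (M ⧸ N) ≠ ⊤ := by
    intro h
    have h1 : (1 : B) ∈ Module.annihilator B (M ⧸ N) := h ▸ Submodule.mem_top
    have h2 := Module.mem_annihilator.mp h1 q
    rw [one_smul] at h2
    exact hq h2
  obtain ⟨m, hm, hle⟩ := Ideal.exists_le_maximal _ hann
  have hsup := aux_max hcard htriv m hm
  have hmap2 : Submodule.map N.mkQ (m • (⊤ : Submodule B M)) =
      m • (⊤ : Submodule B (M ⧸ N)) := by
    rw [Submodule.map_smul'', Submodule.map_top, Submodule.range_mkQ]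
  have htopQ : (⊤ : Submodule B (M ⧸ N)) ≤ m • (⊤ : Submodule B (M ⧸ N)) := by
    intro q' _
    obtain ⟨x, rfl⟩ := N.mkQ_surjective q'
    have hx : x ∈ N ⊔ (m • ⊤ : Submodule B M) := by
      rw [hN, hsup]
      exact Submodule.mem_top
    obtain ⟨y, hy, z, hz, rfl⟩ := Submodule.mem_sup.mp hx
    have hy0 : N.mkQ y = 0 := by
      rw [Submodule.mkQ_apply, Submodule.Quotient.mk_eq_zero]
      exact hy
    have hz' : N.mkQ z ∈ m • (⊤ : Submodule B (M ⧸ N)) := by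
      rw [← hmap2]
      exact Submodule.mem_map_of_mem hz
    rw [map_add, hy0, zero_add]
    exact hz'
  obtain ⟨r, hr1, hr2⟩ := Submodule.exists_sub_one_mem_and_smul_eq_zero_of_fg_of_le_smul m
    (⊤ : Submodule B (M ⧸ N)) (Module.Finite.fg_top) htopQ
  have hrann : r ∈ Module.annihilator B (M ⧸ N) :=
    Module.mem_annihilator.mpr fun q' => hr2 q' Submodule.mem_top
  have h1m : (1 : B) ∈ m := by
    have := m.sub_mem (hle hrann) hr1
    rwa [sub_sub_cancel] at this
  exact hm.ne_top (m.eq_top_iff_one.mpr h1m)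
end

section
/- Let I be a finitely generated ideal of B such that I = (I ∩ A)·B, where A = B₀ and (I ∩ A)·B denotes the ideal of B generated by the degree-zero elements of I. Then I ∩ A is a finitely generated ideal of A. -/
/-- For a `ℤ`-graded commutative ring `B` with degree-zero subring `A = B₀`: if a finitely
generated ideal `I` of `B` is generated by its degree-zero part, i.e. `I = (I ∩ A)·B`,
then `I ∩ A` is a finitely generated ideal of `A`. -/
theorem contraction_fg_of_generated_by_degree_zero
    {B : Type*} [CommRing B] (𝒜 : ℤ → AddSubgroup B) [GradedRing 𝒜]
    (I : Ideal B) (hfg : I.FG)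
    (hgen : I = Ideal.map (SetLike.GradeZero.subring 𝒜).subtype
      (Ideal.comap (SetLike.GradeZero.subring 𝒜).subtype I)) :
    (Ideal.comap (SetLike.GradeZero.subring 𝒜).subtype I).FG := by
  classical
  set A := SetLike.GradeZero.subring 𝒜 with hA
  set J := Ideal.comap A.subtype I with hJdef
  have hmemA : ∀ b : B, b ∈ A ↔ b ∈ 𝒜 0 := fun b => Iff.rfl
  -- `I` is spanned by the image of `J`
  have hIspan : I = Ideal.span (A.subtype '' (J : Set A)) := by
    rw [hgen]; rfl
  -- shrink to a finite generating subset of the image of `J`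
  obtain ⟨G, hG⟩ := hfg
  have hmem : ∀ g ∈ G, ∃ T : Finset B, ↑T ⊆ A.subtype '' (J : Set A) ∧
      g ∈ Ideal.span (T : Set B) := by
    intro g hg
    apply Submodule.mem_span_finite_of_mem_span
    have : g ∈ I := by rw [← hG]; exact Ideal.subset_span hg
    rw [hIspan] at this
    exact this
  choose T hTsub hTmem using hmem
  set S : Finset B := G.attach.biUnion (fun g => T g.1 g.2) with hSdef
  have hSsub : (S : Set B) ⊆ A.subtype '' (J : Set A) := by
    intro x hx
    simp only [hSdef, Finset.coe_biUnion, Finset.mem_coe, Set.mem_iUnion] at hx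
    obtain ⟨g, hg, hx⟩ := hx
    exact hTsub g.1 g.2 hx
  have hIS : I = Ideal.span (S : Set B) := by
    apply le_antisymm
    · rw [← hG, Ideal.span_le]
      intro g hg
      refine Ideal.span_le.mpr ?_ (hTmem g hg)
      intro x hx
      apply Ideal.subset_span
      simp only [hSdef, Finset.coe_biUnion, Finset.mem_coe, Set.mem_iUnion]
      exact ⟨⟨g, hg⟩, Finset.mem_attach _ _, hx⟩
    · rw [hIspan]
      exact Ideal.span_mono hSsub
  -- the candidate finite generating set of `J`
  have hSJ : ∀ s ∈ S, s ∈ A := fun s hs => by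
    obtain ⟨a, _, rfl⟩ := hSsub hs; exact a.2
  set T' : Set A := (A.subtype) ⁻¹' (S : Set B) with hT'def
  have hT'fin : T'.Finite :=
    Set.Finite.preimage (Set.injOn_of_injective (Subtype.coe_injective)) S.finite_toSet
  refine ⟨hT'fin.toFinset, ?_⟩
  rw [hT'fin.coe_toFinset]
  apply le_antisymm
  · -- span T' ≤ J
    rw [Ideal.span_le]
    intro a ha
    have : (a : B) ∈ I := by
      rw [hIS]; exact Ideal.subset_span ha
    exact this
  · -- J ≤ span T'
    intro x hx
    have hxI : (x : B) ∈ Ideal.span (S : Set B) := by rw [← hIS]; exact hx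
    obtain ⟨c, hcsupp, hcsum⟩ := Submodule.mem_span_set.mp hxI
    have key : x = ∑ s ∈ c.support.attach,
        (⟨(DirectSum.decompose 𝒜 (c s.1) 0 : B), (DirectSum.decompose 𝒜 (c s.1) 0).2⟩ : A) *
          ⟨s.1, hSJ s.1 (hcsupp s.2)⟩ := by
      apply Subtype.ext
      push_cast
      have hx0 : (x : B) = (DirectSum.decompose 𝒜 (x : B) 0 : B) :=
        (DirectSum.decompose_of_mem_same 𝒜 x.2).symm
      rw [hx0, ← hcsum, Finsupp.sum]
      rw [Finset.sum_attach c.support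
        (fun a => ((DirectSum.decompose 𝒜 (c a) 0 : B) * a))]
      have hdec : ∀ (s : Finset B),
          (DirectSum.decompose 𝒜 (∑ a ∈ s, c a • a) 0 : B)
            = ∑ a ∈ s, (DirectSum.decompose 𝒜 (c a • a) 0 : B) := by
        intro s
        induction s using Finset.induction with
        | empty => simp
        | insert _ _ h ih =>
          rw [Finset.sum_insert h, Finset.sum_insert h, DirectSum.decompose_add,
            DirectSum.add_apply, AddSubgroup.coe_add, ih]
      rw [hdec]
      apply Finset.sum_congr rfl
      intro a ha
      have ha0 : a ∈ 𝒜 0 := hSJ a (hcsupp ha)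
      rw [smul_eq_mul]
      simpa using DirectSum.coe_decompose_mul_add_of_right_mem 𝒜 (i := 0) (j := 0) ha0
    rw [key]
    apply Ideal.sum_mem
    intro s _
    apply Ideal.mul_mem_left
    apply Ideal.subset_span
    show (s.1 : B) ∈ (S : Set B)
    exact hcsupp s.2
end
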